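/- Let p be a strictly positive probability distribution on {0,1}^K, let o_1, o_2 be linear orders on the attributes, and let 𝒞_1 ∈ Seg(o_1), 𝒞_2 ∈ Seg(o_2) be collections with p ∈ M(𝒞_1) and p ∈ M(𝒞_2). Let (X_n)_{n≥1} be i.i.d. {0,1}^K-valued random variables with common law p, let D_N be the dataset of the first N samples, and define Z_N = N·(∑_{C ∈ 𝒞_1} H(C; D_N) − ∑_{S: S_i of 𝒞_1} H(S; D_N)) − N·(∑_{C ∈ 𝒞_2} H(C; D_N) − ∑_{S: S_i of 𝒞_2} H(S; D_N)). Then for every sequence of reals t_N with t_N → ∞, P(Z_N ≥ t_N) → 0 as N → ∞. -/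

import Mathlib

open Finset

/-- The marginal probability `p(X = v)`: the probability that the coordinates in `X`
agree with `v`. -/
noncomputable def marg {K : ℕ} (p : (Fin K → Bool) → ℝ) (X : Finset (Fin K))
    (v : Fin K → Bool) : ℝ :=
  ∑ t ∈ Finset.univ.filter (fun t : Fin K → Bool => ∀ i ∈ X, t i = v i), p t

/-- `p` is a probability distribution on `{0,1}^K`. -/
def IsDist {K : ℕ} (p : (Fin K → Bool) → ℝ) : Prop :=
  (∀ t, 0 ≤ p t) ∧ ∑ t : Fin K → Bool, p t = 1

/-- The empirical distribution of a dataset `D`. -/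
noncomputable def empDist {K : ℕ} (D : Multiset (Fin K → Bool)) : (Fin K → Bool) → ℝ :=
  fun v => (D.count v : ℝ) / (Multiset.card D : ℝ)

/-- The entropy (base 2) of the marginal of `p` on the attribute set `X`,
summing over representative vectors which are `false` outside of `X`. -/
noncomputable def segEntropy {K : ℕ} (p : (Fin K → Bool) → ℝ) (X : Finset (Fin K)) : ℝ :=
  -∑ v ∈ Finset.univ.filter (fun v : Fin K → Bool => ∀ i, i ∉ X → v i = false),
      marg p X v * Real.logb 2 (marg p X v)

/-- The item segment of the attributes at positions `a,…,b` in the order `o`. -/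
def segIv {K : ℕ} (o : Equiv.Perm (Fin K)) (a b : ℕ) : Finset (Fin K) :=
  (Finset.univ.filter (fun k : Fin K => a ≤ (k : ℕ) ∧ (k : ℕ) ≤ b)).image o

/-- A collection `𝒞 = {C_1, …, C_L} ∈ Seg(o)` of item segments covering all attributes,
forming an antichain, listed in the order of their first attribute.  The `i`-th segment
(for `0 ≤ i < L`) consists of the positions `s i, …, e i` in the order `o`. -/
structure SegColl (K : ℕ) where
  /-- number of segments -/
  L : ℕ
  hL : 0 < L
  /-- start position of each segment -/
  s : ℕ → ℕ
  /-- end position of each segment -/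
  e : ℕ → ℕ
  s_mono : ∀ i, i + 1 < L → s i < s (i + 1)
  e_mono : ∀ i, i + 1 < L → e i < e (i + 1)
  s_le_e : ∀ i, i < L → s i ≤ e i
  s_first : s 0 = 0
  e_last : e (L - 1) = K - 1
  e_lt : ∀ i, i < L → e i < K
  covers : ∀ i, i + 1 < L → s (i + 1) ≤ e i + 1

/-- The `i`-th item segment `C_{i+1}` of the collection, under the order `o`. -/
def SegColl.seg {K : ℕ} (𝒞 : SegColl K) (o : Equiv.Perm (Fin K)) (i : ℕ) : Finset (Fin K) :=
  segIv o (𝒞.s i) (𝒞.e i)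

/-- The intersection `S_i = C_i ∩ C_{i+1}` of consecutive segments. -/
def SegColl.ovl {K : ℕ} (𝒞 : SegColl K) (o : Equiv.Perm (Fin K)) (i : ℕ) : Finset (Fin K) :=
  𝒞.seg o i ∩ 𝒞.seg o (i + 1)

/-- Membership of a distribution `p` in the model `M(𝒞)`:
`p(A = t) ∏_{i=1}^{L-1} p(S_i = t) = ∏_{i=1}^{L} p(C_i = t)` for all `t`. -/
def memModel {K : ℕ} (o : Equiv.Perm (Fin K)) (𝒞 : SegColl K)
    (p : (Fin K → Bool) → ℝ) : Prop :=
  IsDist p ∧ ∀ t : Fin K → Bool,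
    p t * ∏ i ∈ Finset.range (𝒞.L - 1), marg p (𝒞.ovl o i) t
      = ∏ i ∈ Finset.range 𝒞.L, marg p (𝒞.seg o i) t

/-- The number of free parameters `df(𝒞)`. -/
def SegColl.df {K : ℕ} (𝒞 : SegColl K) (o : Equiv.Perm (Fin K)) : ℤ :=
  (∑ i ∈ Finset.range 𝒞.L, ((2 : ℤ) ^ (𝒞.seg o i).card - 1))
    - ∑ i ∈ Finset.range (𝒞.L - 1), ((2 : ℤ) ^ (𝒞.ovl o i).card - 1)

/-- The score of a single item segment `C`:
`score(C) = |D| H(C; D) + (log₂|D|/2)(2^{|C|} - 1)`. -/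
noncomputable def segScore {K : ℕ} (D : Multiset (Fin K → Bool)) (C : Finset (Fin K)) : ℝ :=
  (Multiset.card D : ℝ) * segEntropy (empDist D) C
    + Real.logb 2 (Multiset.card D) / 2 * ((2 : ℝ) ^ C.card - 1)

/-- The score of a collection: `score(𝒞) = ∑ score(C_i) - ∑ score(S_i)`. -/
noncomputable def collScore {K : ℕ} (D : Multiset (Fin K → Bool)) (o : Equiv.Perm (Fin K))
    (𝒞 : SegColl K) : ℝ :=
  ∑ i ∈ Finset.range 𝒞.L, segScore D (𝒞.seg o i)
    - ∑ i ∈ Finset.range (𝒞.L - 1), segScore D (𝒞.ovl o i)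

/-- The dataset consisting of the first `N` samples of the process `X`. -/
def sampleData {K : ℕ} {Ω : Type*} (X : ℕ → Ω → (Fin K → Bool)) (N : ℕ) (ω : Ω) :
    Multiset (Fin K → Bool) :=
  (Multiset.range N).map fun n => X n ω

/-- `∑_{C ∈ 𝒞} H(C; D) - ∑_i H(S_i; D)`, the entropy term of the collection `𝒞`. -/
noncomputable def collEnt {K : ℕ} (D : Multiset (Fin K → Bool)) (o : Equiv.Perm (Fin K))
    (𝒞 : SegColl K) : ℝ :=
  ∑ i ∈ Finset.range 𝒞.L, segEntropy (empDist D) (𝒞.seg o i)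
    - ∑ i ∈ Finset.range (𝒞.L - 1), segEntropy (empDist D) (𝒞.ovl o i)

open MeasureTheory Filter

section Marg
variable {K : ℕ} {p q : (Fin K → Bool) → ℝ} {X S C E E' : Finset (Fin K)}
  {u v : Fin K → Bool}

/-- representatives -/
def reps {K : ℕ} (X : Finset (Fin K)) : Finset (Fin K → Bool) :=
  Finset.univ.filter (fun v : Fin K → Bool => ∀ i, i ∉ X → v i = false)

def pproj {K : ℕ} (X : Finset (Fin K)) (t : Fin K → Bool) : Fin K → Bool :=
  fun i => if i ∈ X then t i else false

lemma pproj_mem : pproj X t ∈ reps X := by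
  simp only [reps, mem_filter, mem_univ, true_and, pproj]
  intro i hi; simp [hi]

lemma pproj_agrees (hi : i ∈ X) : pproj X t i = t i := by simp [pproj, hi]

lemma marg_nonneg (hp : ∀ t, 0 ≤ p t) : 0 ≤ marg p X v :=
  Finset.sum_nonneg fun t _ => hp t

lemma marg_mono (hp : ∀ t, 0 ≤ p t) (h : S ⊆ C) : marg p C v ≤ marg p S v := by
  apply Finset.sum_le_sum_of_subset_of_nonneg
  · intro t ht
    simp only [mem_filter, mem_univ, true_and] at ht ⊢
    exact fun i hi => ht i (h hi)
  · exact fun t _ _ => hp t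

lemma self_le_marg (hp : ∀ t, 0 ≤ p t) : p v ≤ marg p X v := by
  apply Finset.single_le_sum (fun t _ => hp t)
  simp

lemma marg_congr (h : ∀ i ∈ X, u i = v i) : marg p X u = marg p X v := by
  unfold marg
  apply Finset.sum_congr _ (fun _ _ => rfl)
  apply Finset.filter_congr
  intro t _
  constructor
  · intro ht i hi; rw [ht i hi, h i hi]
  · intro ht i hi; rw [ht i hi, h i hi]

lemma marg_pproj (hXp : ∀ t, 0 ≤ p t) : marg p X (pproj X t) = marg p X t :=
  marg_congr fun i hi => pproj_agrees hi

/-- key fibering identity -/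
lemma sum_reps_marg (p : (Fin K → Bool) → ℝ) (X : Finset (Fin K))
    (f : (Fin K → Bool) → ℝ) :
    ∑ w ∈ reps X, marg p X w * f w = ∑ t, p t * f (pproj X t) := by
  rw [← Finset.sum_fiberwise_of_maps_to (g := pproj X) (t := reps X)
      (fun t _ => pproj_mem) (fun t => p t * f (pproj X t))]
  apply Finset.sum_congr rfl
  intro w hw
  have hw' : ∀ i ∉ X, w i = false := by
    simpa [reps] using hw
  have hfib : Finset.univ.filter (fun t => pproj X t = w)
      = Finset.univ.filter (fun t : Fin K → Bool => ∀ i ∈ X, t i = w i) := by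
    apply Finset.filter_congr
    intro t _
    constructor
    · intro h i hi; rw [← h]; exact (pproj_agrees hi).symm
    · intro h; funext i
      by_cases hi : i ∈ X
      · rw [pproj_agrees hi, h i hi]
      · rw [hw' i hi]; simp [pproj, hi]
  rw [hfib]
  unfold marg
  rw [Finset.sum_mul]
  apply Finset.sum_congr rfl
  intro t ht
  simp only [mem_filter, mem_univ, true_and] at ht
  have hpt : pproj X t = w := by
    funext i
    by_cases hi : i ∈ X
    · rw [pproj_agrees hi, ht i hi]
    · rw [hw' i hi]; simp [pproj, hi]
  rw [hpt]

lemma sum_reps_marg_eq (p : (Fin K → Bool) → ℝ) (X : Finset (Fin K)) :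
    ∑ w ∈ reps X, marg p X w = ∑ t, p t := by
  have := sum_reps_marg p X (fun _ => 1)
  simpa using this

/-- master fiber-sum lemma -/
lemma sum_fiber_marg (hq : ∀ t, 0 ≤ q t) (hEE' : E ⊆ E') (hXE' : X ⊆ E')
    (hcov : E' ⊆ E ∪ X) (hv : ∀ i ∉ E, v i = false) :
    ∑ w ∈ (reps E').filter (fun w => ∀ i ∈ E, w i = v i), marg q X w
      = marg q (X ∩ E) v := by
  classical
  unfold marg
  set W := (reps E').filter (fun w => ∀ i ∈ E, w i = v i) with hW
  have step1 : ∑ w ∈ W, ∑ t ∈ Finset.univ.filter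
        (fun t : Fin K → Bool => ∀ i ∈ X, t i = w i), q t
      = ∑ t : Fin K → Bool, ∑ w ∈ W, (if ∀ i ∈ X, t i = w i then q t else 0) := by
    rw [Finset.sum_comm]
    apply Finset.sum_congr rfl
    intro w _
    rw [Finset.sum_filter]
  rw [step1, Finset.sum_filter (fun t : Fin K → Bool => ∀ i ∈ X ∩ E, t i = v i) q]
  apply Finset.sum_congr rfl
  intro t _
  rw [← Finset.sum_filter]
  set w₀ : Fin K → Bool := fun i => if i ∈ E then v i else if i ∈ X then t i else false
    with hw₀
  by_cases hc : ∀ i ∈ X ∩ E, t i = v i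
  · rw [if_pos hc]
    have hset : W.filter (fun w => ∀ i ∈ X, t i = w i) = {w₀} := by
      ext w
      simp only [Finset.mem_filter, Finset.mem_singleton, hW, reps, Finset.mem_univ,
        true_and]
      constructor
      · rintro ⟨⟨hrep, hE⟩, hX⟩
        funext i
        by_cases hiE : i ∈ E
        · rw [hE i hiE]; simp [hw₀, hiE]
        · by_cases hiX : i ∈ X
          · rw [← hX i hiX]; simp [hw₀, hiE, hiX]
          · have hiE' : i ∉ E' := fun h => by
              rcases Finset.mem_union.1 (hcov h) with h | h
              exacts [hiE h, hiX h]
            rw [hrep i hiE']; simp [hw₀, hiE, hiX]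
      · rintro rfl
        refine ⟨⟨?_, ?_⟩, ?_⟩
        · intro i hi
          have h1 : i ∉ E := fun h => hi (hEE' h)
          have h2 : i ∉ X := fun h => hi (hXE' h)
          simp [hw₀, h1, h2]
        · intro i hi; simp [hw₀, hi]
        · intro i hi
          by_cases hiE : i ∈ E
          · have := hc i (Finset.mem_inter.2 ⟨hi, hiE⟩)
            simp [hw₀, hiE, this]
          · simp [hw₀, hiE, hi]
    rw [hset, Finset.sum_singleton]
  · rw [if_neg hc]
    have hset : W.filter (fun w => ∀ i ∈ X, t i = w i) = ∅ := by
      rw [Finset.filter_eq_empty_iff]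
      intro w hw hX
      simp only [hW, reps, Finset.mem_filter, Finset.mem_univ, true_and] at hw
      exact hc fun i hi => by
        have hiX := Finset.mem_inter.1 hi
        rw [hX i hiX.1, hw.2 i hiX.2]
    rw [hset, Finset.sum_empty]
open Finset

end Marg

section LogSum
variable {α : Type*}

/-- the log-sum inequality -/
lemma log_sum_ineq (s : Finset α) (a b : α → ℝ) (ha : ∀ i ∈ s, 0 ≤ a i)
    (hb : ∀ i ∈ s, 0 < b i) :
    (∑ i ∈ s, a i) * Real.log ((∑ i ∈ s, a i) / (∑ i ∈ s, b i))
      ≤ ∑ i ∈ s, a i * Real.log (a i / b i) := by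
  rcases s.eq_empty_or_nonempty with rfl | hne
  · simp
  set A := ∑ i ∈ s, a i with hA
  set B := ∑ i ∈ s, b i with hB
  have hBpos : 0 < B := Finset.sum_pos hb hne
  have hAnn : 0 ≤ A := Finset.sum_nonneg ha
  rcases eq_or_lt_of_le hAnn with hA0 | hApos
  · have hz : ∀ i ∈ s, a i = 0 := fun i hi =>
      (Finset.sum_eq_zero_iff_of_nonneg ha).1 hA0.symm i hi
    rw [← hA0]
    simp only [zero_mul]
    apply Finset.sum_nonneg
    intro i hi; rw [hz i hi]; simp
  have key : ∀ i ∈ s, a i - b i * (A / B)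
      ≤ a i * Real.log (a i / b i) - a i * Real.log (A / B) := by
    intro i hi
    have hbi := hb i hi
    rcases eq_or_lt_of_le (ha i hi) with h0 | hpos
    · have hnn : 0 ≤ b i * (A / B) :=
        mul_nonneg hbi.le (div_nonneg hApos.le hBpos.le)
      rw [← h0]
      simp only [zero_mul, zero_sub, sub_zero]
      linarith
    · have h1 : a i * Real.log (a i / b i) - a i * Real.log (A / B)
          = a i * Real.log ((a i / b i) / (A / B)) := by
        rw [← mul_sub, ← Real.log_div (div_pos hpos hbi).ne' (div_pos hApos hBpos).ne']
      have hZ : (0:ℝ) < (A / B) / (a i / b i) := by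
        exact div_pos (div_pos hApos hBpos) (div_pos hpos hbi)
      have hlog := Real.log_le_sub_one_of_pos hZ
      have hlog2 : 1 - (A/B)/(a i / b i) ≤ Real.log ((a i / b i)/(A/B)) := by
        have hinv : Real.log ((a i / b i)/(A/B)) = - Real.log ((A/B)/(a i / b i)) := by
          rw [← Real.log_inv, inv_div]
        rw [hinv]; linarith
      have h3 : a i * (1 - (A/B)/(a i / b i)) ≤ a i * Real.log ((a i / b i)/(A/B)) :=
        mul_le_mul_of_nonneg_left hlog2 hpos.le
      have h4 : a i * (1 - (A/B)/(a i / b i)) = a i - b i * (A/B) := by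
        field_simp
      linarith
  have hsum := Finset.sum_le_sum key
  have e1 : ∑ i ∈ s, (a i - b i * (A / B)) = A - B * (A/B) := by
    rw [Finset.sum_sub_distrib, ← Finset.sum_mul]
  have e2 : B * (A / B) = A := by field_simp
  have e3 : ∑ i ∈ s, (a i * Real.log (a i / b i) - a i * Real.log (A / B))
      = (∑ i ∈ s, a i * Real.log (a i / b i)) - A * Real.log (A / B) := by
    rw [Finset.sum_sub_distrib, ← Finset.sum_mul]
  rw [e1, e2, e3] at hsum
  linarith

lemma logb_sum_ineq (s : Finset α) (a b : α → ℝ) (ha : ∀ i ∈ s, 0 ≤ a i)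
    (hb : ∀ i ∈ s, 0 < b i) :
    (∑ i ∈ s, a i) * Real.logb 2 ((∑ i ∈ s, a i) / (∑ i ∈ s, b i))
      ≤ ∑ i ∈ s, a i * Real.logb 2 (a i / b i) := by
  have h := log_sum_ineq s a b ha hb
  have hl2 : (0:ℝ) < Real.log 2 := Real.log_pos one_lt_two
  simp only [Real.logb, ← mul_div_assoc]
  rw [← Finset.sum_div]
  gcongr

end LogSum

section Klm
variable {K : ℕ} (q p : (Fin K → Bool) → ℝ) (X S C : Finset (Fin K))

/-- marginal KL divergence (base 2) on attribute set `X` -/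
noncomputable def klm : ℝ :=
  ∑ v ∈ reps X, marg q X v * Real.logb 2 (marg q X v / marg p X v)

variable {q p X S C}

lemma klm_nonneg (hq : ∀ t, 0 ≤ q t) (hqs : ∑ t, q t = 1) (hp : ∀ t, 0 < p t)
    (hps : ∑ t, p t = 1) : 0 ≤ klm q p X := by
  have h := logb_sum_ineq (reps X) (fun v => marg q X v) (fun v => marg p X v)
    (fun v _ => marg_nonneg hq) (fun v _ => lt_of_lt_of_le (hp v) (self_le_marg (fun t => (hp t).le)))
  rw [sum_reps_marg_eq q X, sum_reps_marg_eq p X, hqs, hps] at h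
  simpa [klm] using h

lemma klm_mono (hq : ∀ t, 0 ≤ q t) (hp : ∀ t, 0 < p t) (hSC : S ⊆ C) :
    klm q p S ≤ klm q p C := by
  have hp' : ∀ t, 0 ≤ p t := fun t => (hp t).le
  unfold klm
  rw [← Finset.sum_fiberwise_of_maps_to (g := pproj S) (t := reps S)
      (fun w _ => pproj_mem) (fun w => marg q C w * Real.logb 2 (marg q C w / marg p C w))]
  apply Finset.sum_le_sum
  intro v hv
  have hv' : ∀ i ∉ S, v i = false := by simpa [reps] using hv
  -- rewrite the fiber
  have hfib : (reps C).filter (fun w => pproj S w = v)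
      = (reps C).filter (fun w => ∀ i ∈ S, w i = v i) := by
    apply Finset.filter_congr
    intro w hw
    have hw' : ∀ i ∉ C, w i = false := by simpa [reps] using hw
    constructor
    · intro h i hi; rw [← h]; exact (pproj_agrees hi).symm
    · intro h
      funext i
      by_cases hi : i ∈ S
      · rw [pproj_agrees hi, h i hi]
      · rw [hv' i hi]; simp [pproj, hi]
  rw [hfib]
  have hsum : ∀ r : (Fin K → Bool) → ℝ, (∀ t, 0 ≤ r t) →
      ∑ w ∈ (reps C).filter (fun w => ∀ i ∈ S, w i = v i), marg r C w = marg r S v := by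
    intro r hr
    have := sum_fiber_marg (q := r) (E := S) (E' := C) (X := C) hr hSC (le_refl C)
      (by rw [Finset.union_comm]; exact Finset.subset_union_left) hv'
    rwa [Finset.inter_eq_right.2 hSC] at this
  have h := logb_sum_ineq ((reps C).filter (fun w => ∀ i ∈ S, w i = v i))
    (fun w => marg q C w) (fun w => marg p C w)
    (fun w _ => marg_nonneg hq)
    (fun w _ => lt_of_lt_of_le (hp w) (self_le_marg hp'))
  rw [hsum q hq, hsum p hp'] at h
  exact h

end Klm


section Ent
variable {K : ℕ} {q p : (Fin K → Bool) → ℝ} {X : Finset (Fin K)}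

lemma reps_def (X : Finset (Fin K)) :
    Finset.univ.filter (fun v : Fin K → Bool => ∀ i, i ∉ X → v i = false) = reps X := rfl

/-- entropy as a sum over all vectors -/
lemma segEntropy_eq (q : (Fin K → Bool) → ℝ) (X : Finset (Fin K)) :
    segEntropy q X = -∑ t : Fin K → Bool, q t * Real.logb 2 (marg q X t) := by
  unfold segEntropy
  rw [reps_def]
  congr 1
  rw [sum_reps_marg q X (fun v => Real.logb 2 (marg q X v))]
  apply Finset.sum_congr rfl
  intro t _
  rw [marg_congr (fun i hi => pproj_agrees hi)]

/-- cross-entropy regrouping -/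
lemma cross_eq (q p : (Fin K → Bool) → ℝ) (X : Finset (Fin K)) :
    ∑ v ∈ reps X, marg q X v * Real.logb 2 (marg p X v)
      = ∑ t : Fin K → Bool, q t * Real.logb 2 (marg p X t) := by
  rw [sum_reps_marg q X (fun v => Real.logb 2 (marg p X v))]
  apply Finset.sum_congr rfl
  intro t _
  rw [marg_congr (fun i hi => pproj_agrees hi)]

/-- `crossM − H = klm` -/
lemma cross_sub_ent (hq : ∀ t, 0 ≤ q t) (hp : ∀ t, 0 < p t) :
    (-∑ t : Fin K → Bool, q t * Real.logb 2 (marg p X t)) - segEntropy q X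
      = klm q p X := by
  rw [← cross_eq q p X]
  unfold segEntropy klm
  rw [reps_def, neg_sub_neg, ← Finset.sum_sub_distrib]
  apply Finset.sum_congr rfl
  intro v _
  rw [← mul_sub]
  rcases eq_or_lt_of_le (marg_nonneg (v := v) (X := X) hq) with h0 | hpos
  · rw [← h0]; ring
  · have hpm : 0 < marg p X v := lt_of_lt_of_le (hp v) (self_le_marg (fun t => (hp t).le))
    rw [Real.logb_div hpos.ne' hpm.ne']
end Ent

section ModelSide
variable {K : ℕ} {p q : (Fin K → Bool) → ℝ} {o : Equiv.Perm (Fin K)} {𝒞 : SegColl K}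

lemma model_logb (h : memModel o 𝒞 p) (hpos : ∀ t, 0 < p t) (t : Fin K → Bool) :
    Real.logb 2 (p t) = (∑ i ∈ Finset.range 𝒞.L, Real.logb 2 (marg p (𝒞.seg o i) t))
      - ∑ i ∈ Finset.range (𝒞.L - 1), Real.logb 2 (marg p (𝒞.ovl o i) t) := by
  have hp' : ∀ t, 0 ≤ p t := fun t => (hpos t).le
  have hmpos : ∀ X : Finset (Fin K), 0 < marg p X t :=
    fun X => lt_of_lt_of_le (hpos t) (self_le_marg hp')
  have hS : (0:ℝ) < ∏ i ∈ Finset.range (𝒞.L - 1), marg p (𝒞.ovl o i) t :=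
    Finset.prod_pos fun i _ => hmpos _
  have hC : (0:ℝ) < ∏ i ∈ Finset.range 𝒞.L, marg p (𝒞.seg o i) t :=
    Finset.prod_pos fun i _ => hmpos _
  have heq : p t = (∏ i ∈ Finset.range 𝒞.L, marg p (𝒞.seg o i) t)
      / ∏ i ∈ Finset.range (𝒞.L - 1), marg p (𝒞.ovl o i) t := by
    rw [eq_div_iff hS.ne']
    exact h.2 t
  rw [heq, Real.logb_div hC.ne' hS.ne',
    Real.logb_prod _ _ (fun i _ => (hmpos _).ne'),
    Real.logb_prod _ _ (fun i _ => (hmpos _).ne')]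

/-- statement (b): `collEnt` for a model containing `p` is at most the cross entropy. -/
lemma collEnt_le_cross (h : memModel o 𝒞 p) (hpos : ∀ t, 0 < p t)
    (hq : ∀ t, 0 ≤ q t) (hqs : ∑ t, q t = 1) :
    (∑ i ∈ Finset.range 𝒞.L, segEntropy q (𝒞.seg o i))
      - ∑ i ∈ Finset.range (𝒞.L - 1), segEntropy q (𝒞.ovl o i)
    ≤ -∑ t : Fin K → Bool, q t * Real.logb 2 (p t) := by
  have hps := h.1.2
  have expand : -∑ t : Fin K → Bool, q t * Real.logb 2 (p t)
      = (∑ i ∈ Finset.range 𝒞.L, -∑ t : Fin K → Bool, q t * Real.logb 2 (marg p (𝒞.seg o i) t))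
        - ∑ i ∈ Finset.range (𝒞.L - 1),
            -∑ t : Fin K → Bool, q t * Real.logb 2 (marg p (𝒞.ovl o i) t) := by
    have : ∀ t : Fin K → Bool, q t * Real.logb 2 (p t)
        = (∑ i ∈ Finset.range 𝒞.L, q t * Real.logb 2 (marg p (𝒞.seg o i) t))
          - ∑ i ∈ Finset.range (𝒞.L - 1), q t * Real.logb 2 (marg p (𝒞.ovl o i) t) := by
      intro t
      rw [model_logb h hpos t, mul_sub, Finset.mul_sum, Finset.mul_sum]
    rw [Finset.sum_congr rfl (fun t _ => this t), Finset.sum_sub_distrib,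
      Finset.sum_comm, @Finset.sum_comm _ _ _ _ Finset.univ]
    simp [Finset.sum_neg_distrib, neg_sub]
    ring
  rw [expand]
  have hklm : ∀ X : Finset (Fin K),
      (-∑ t : Fin K → Bool, q t * Real.logb 2 (marg p X t)) - segEntropy q X
        = klm q p X := fun X => cross_sub_ent hq hpos
  have hfinal : ∑ i ∈ Finset.range (𝒞.L - 1), klm q p (𝒞.ovl o i)
      ≤ ∑ i ∈ Finset.range 𝒞.L, klm q p (𝒞.seg o i) := by
    have step1 : ∑ i ∈ Finset.range (𝒞.L - 1), klm q p (𝒞.ovl o i)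
        ≤ ∑ i ∈ Finset.range (𝒞.L - 1), klm q p (𝒞.seg o (1 + i)) := by
      apply Finset.sum_le_sum
      intro i _
      have : 𝒞.ovl o i ⊆ 𝒞.seg o (1 + i) := by
        rw [add_comm]; exact Finset.inter_subset_right
      exact klm_mono hq hpos this
    have step2 : ∑ i ∈ Finset.range (𝒞.L - 1), klm q p (𝒞.seg o (1 + i))
        = ∑ i ∈ Finset.Ico 1 𝒞.L, klm q p (𝒞.seg o i) := by
      rw [Finset.sum_Ico_eq_sum_range]
    have step3 : ∑ i ∈ Finset.Ico 1 𝒞.L, klm q p (𝒞.seg o i)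
        ≤ ∑ i ∈ Finset.range 𝒞.L, klm q p (𝒞.seg o i) := by
      apply Finset.sum_le_sum_of_subset_of_nonneg
      · rw [Finset.range_eq_Ico]
        exact Finset.Ico_subset_Ico (Nat.zero_le 1) le_rfl
      · exact fun i _ _ => klm_nonneg hq hqs hpos hps
    exact step1.trans (step2.trans_le step3)
  have e1 : ∀ i, (-∑ t : Fin K → Bool, q t * Real.logb 2 (marg p (𝒞.seg o i) t))
      = segEntropy q (𝒞.seg o i) + klm q p (𝒞.seg o i) := by
    intro i; rw [← hklm (𝒞.seg o i)]; ring
  have e2 : ∀ i, (-∑ t : Fin K → Bool, q t * Real.logb 2 (marg p (𝒞.ovl o i) t))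
      = segEntropy q (𝒞.ovl o i) + klm q p (𝒞.ovl o i) := by
    intro i; rw [← hklm (𝒞.ovl o i)]; ring
  rw [Finset.sum_congr rfl (fun i _ => e1 i), Finset.sum_congr rfl (fun i _ => e2 i),
    Finset.sum_add_distrib, Finset.sum_add_distrib]
  linarith

end ModelSide

section Interval
variable {K : ℕ} {o : Equiv.Perm (Fin K)} {𝒞 : SegColl K}

lemma mem_segIv {a b : ℕ} {k : Fin K} :
    k ∈ segIv o a b ↔ a ≤ ((o.symm k : Fin K) : ℕ) ∧ ((o.symm k : Fin K) : ℕ) ≤ b := by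
  simp only [segIv, Finset.mem_image, Finset.mem_filter, Finset.mem_univ, true_and]
  constructor
  · rintro ⟨m, hm, rfl⟩
    simpa using hm
  · intro h
    exact ⟨o.symm k, h, o.apply_symm_apply k⟩

lemma e_mono' (𝒞 : SegColl K) : ∀ i j, i ≤ j → j < 𝒞.L → 𝒞.e i ≤ 𝒞.e j := by
  intro i j hij hj
  induction j with
  | zero =>
    have h0 : i = 0 := Nat.le_zero.1 hij
    subst h0; exact le_rfl
  | succ n ih =>
    rcases Nat.lt_succ_iff_lt_or_eq.1 (Nat.lt_succ_of_le hij) with h | h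
    · exact le_trans (ih (by omega) (by omega)) (𝒞.e_mono n hj).le
    · subst h; exact le_rfl

lemma seg_subset_E {i j : ℕ} (hij : i ≤ j) (hj : j < 𝒞.L) :
    𝒞.seg o i ⊆ segIv o 0 (𝒞.e j) := by
  intro k hk
  rw [SegColl.seg, mem_segIv] at hk
  rw [mem_segIv]
  exact ⟨Nat.zero_le _, le_trans hk.2 (e_mono' 𝒞 i j hij hj)⟩

lemma ovl_subset_E {i j : ℕ} (hij : i ≤ j) (hj : j < 𝒞.L) :
    𝒞.ovl o i ⊆ segIv o 0 (𝒞.e j) :=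
  le_trans Finset.inter_subset_left (seg_subset_E hij hj)

lemma E_subset_succ {j : ℕ} (hj : j + 1 < 𝒞.L) :
    segIv o 0 (𝒞.e j) ⊆ segIv o 0 (𝒞.e (j+1)) := by
  intro k hk
  rw [mem_segIv] at hk ⊢
  exact ⟨hk.1, le_trans hk.2 (𝒞.e_mono j hj).le⟩

lemma seg_subset_succ {j : ℕ} (hj : j + 1 < 𝒞.L) :
    𝒞.seg o (j+1) ⊆ segIv o 0 (𝒞.e (j+1)) := by
  intro k hk
  rw [SegColl.seg, mem_segIv] at hk
  rw [mem_segIv]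
  exact ⟨Nat.zero_le _, hk.2⟩

lemma E_cover {j : ℕ} (hj : j + 1 < 𝒞.L) :
    segIv o 0 (𝒞.e (j+1)) ⊆ segIv o 0 (𝒞.e j) ∪ 𝒞.seg o (j+1) := by
  intro k hk
  rw [mem_segIv] at hk
  have hc := 𝒞.covers j hj
  rw [Finset.mem_union, mem_segIv, SegColl.seg, mem_segIv]
  omega

lemma seg_inter_E {j : ℕ} (hj : j + 1 < 𝒞.L) :
    𝒞.seg o (j+1) ∩ segIv o 0 (𝒞.e j) = 𝒞.ovl o j := by
  have hs := 𝒞.s_mono j hj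
  have he := 𝒞.e_mono j hj
  ext k
  rw [Finset.mem_inter, SegColl.ovl, Finset.mem_inter]
  rw [SegColl.seg, SegColl.seg, mem_segIv, mem_segIv, mem_segIv]
  omega

lemma E_first : segIv o 0 (𝒞.e 0) = 𝒞.seg o 0 := by
  rw [SegColl.seg, 𝒞.s_first]

lemma E_last : segIv o 0 (𝒞.e (𝒞.L - 1)) = Finset.univ := by
  apply Finset.eq_univ_of_forall
  intro k
  rw [mem_segIv, 𝒞.e_last]
  have : ((o.symm k : Fin K) : ℕ) < K := (o.symm k).2
  omega

lemma reps_univ : reps (Finset.univ : Finset (Fin K)) = Finset.univ := by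
  apply Finset.eq_univ_of_forall
  intro v
  simp [reps]

end Interval

section Telescope
variable {K : ℕ} {q : (Fin K → Bool) → ℝ} {o : Equiv.Perm (Fin K)} {𝒞 : SegColl K}
  {E E' : Finset (Fin K)}

lemma div_self_le_one' {x : ℝ} (hx : 0 ≤ x) : x / x ≤ 1 := by
  rcases eq_or_lt_of_le hx with h | h
  · rw [← h]; simp
  · rw [div_self h.ne']

lemma reps_fiber (hEE' : E ⊆ E') {v : Fin K → Bool} (hv : v ∈ reps E) :
    (reps E').filter (fun w => pproj E w = v)
      = (reps E').filter (fun w => ∀ i ∈ E, w i = v i) := by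
  have hv' : ∀ i ∉ E, v i = false := by simpa [reps] using hv
  apply Finset.filter_congr
  intro w hw
  have hw' : ∀ i ∉ E', w i = false := by simpa [reps] using hw
  constructor
  · intro h i hi; rw [← h]; exact (pproj_agrees hi).symm
  · intro h
    funext i
    by_cases hi : i ∈ E
    · rw [pproj_agrees hi, h i hi]
    · rw [hv' i hi]; simp [pproj, hi]

lemma telescope (hq : ∀ t, 0 ≤ q t) (hqs : ∑ t, q t = 1) :
    ∀ j, j < 𝒞.L → ∑ v ∈ reps (segIv o 0 (𝒞.e j)),
      (∏ i ∈ Finset.range (j+1), marg q (𝒞.seg o i) v)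
        / ∏ i ∈ Finset.range j, marg q (𝒞.ovl o i) v ≤ 1 := by
  intro j
  induction j with
  | zero =>
    intro hj
    simp only [Finset.prod_range_one, Finset.prod_range_zero, div_one, zero_add]
    rw [E_first, sum_reps_marg_eq q _, hqs]
  | succ j ih =>
    intro hj
    have hjL : j < 𝒞.L := by omega
    set E := segIv o 0 (𝒞.e j) with hE
    set E' := segIv o 0 (𝒞.e (j+1)) with hE'
    have hEE' : E ⊆ E' := E_subset_succ hj
    rw [← Finset.sum_fiberwise_of_maps_to (g := pproj E) (t := reps E)
        (fun w _ => pproj_mem)]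
    have main : ∀ v ∈ reps E,
        (∑ w ∈ (reps E').filter (fun w => pproj E w = v),
          (∏ i ∈ Finset.range (j+1+1), marg q (𝒞.seg o i) w)
            / ∏ i ∈ Finset.range (j+1), marg q (𝒞.ovl o i) w)
        ≤ (∏ i ∈ Finset.range (j+1), marg q (𝒞.seg o i) v)
            / ∏ i ∈ Finset.range j, marg q (𝒞.ovl o i) v := by
      intro v hv
      have hv' : ∀ i ∉ E, v i = false := by simpa [reps, hE] using hv
      set b := (∏ i ∈ Finset.range (j+1), marg q (𝒞.seg o i) v)
          / ∏ i ∈ Finset.range j, marg q (𝒞.ovl o i) v with hb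
      have hbnn : 0 ≤ b :=
        div_nonneg (Finset.prod_nonneg fun i _ => marg_nonneg hq)
          (Finset.prod_nonneg fun i _ => marg_nonneg hq)
      rw [reps_fiber hEE' hv]
      have hterm : ∀ w ∈ (reps E').filter (fun w => ∀ i ∈ E, w i = v i),
          (∏ i ∈ Finset.range (j+1+1), marg q (𝒞.seg o i) w)
            / ∏ i ∈ Finset.range (j+1), marg q (𝒞.ovl o i) w
          = b * (marg q (𝒞.seg o (j+1)) w / marg q (𝒞.ovl o j) v) := by
        intro w hw
        have hagree : ∀ i ∈ E, w i = v i := (Finset.mem_filter.1 hw).2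
        rw [Finset.prod_range_succ (fun i => marg q (𝒞.seg o i) w) (j+1),
          Finset.prod_range_succ (fun i => marg q (𝒞.ovl o i) w) j, ← div_mul_div_comm]
        congr 2
        · apply Finset.prod_congr rfl
          intro i hi
          exact marg_congr fun k hk =>
            hagree k (seg_subset_E (Nat.lt_succ_iff.1 (Finset.mem_range.1 hi)) hjL hk)
        · apply Finset.prod_congr rfl
          intro i hi
          exact marg_congr fun k hk =>
            hagree k (ovl_subset_E (Nat.lt_succ_iff.1 (Nat.lt_succ_of_lt
              (Finset.mem_range.1 hi))) hjL hk)
        · exact marg_congr fun k hk => hagree k (ovl_subset_E le_rfl hjL hk)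
      rw [Finset.sum_congr rfl hterm, ← Finset.mul_sum, ← Finset.sum_div]
      have hfs : ∑ w ∈ (reps E').filter (fun w => ∀ i ∈ E, w i = v i),
          marg q (𝒞.seg o (j+1)) w = marg q (𝒞.ovl o j) v := by
        have := sum_fiber_marg (q := q) (E := E) (E' := E') (X := 𝒞.seg o (j+1))
          hq hEE' (seg_subset_succ hj) (E_cover hj) hv'
        rwa [seg_inter_E hj] at this
      rw [hfs]
      calc b * (marg q (𝒞.ovl o j) v / marg q (𝒞.ovl o j) v)
          ≤ b * 1 := mul_le_mul_of_nonneg_left (div_self_le_one' (marg_nonneg hq)) hbnn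
        _ = b := mul_one b
    exact le_trans (Finset.sum_le_sum main) (ih hjL)

end Telescope

section StatementA
variable {K : ℕ} {q : (Fin K → Bool) → ℝ} {o : Equiv.Perm (Fin K)} {𝒞 : SegColl K}

lemma marg_univ (q : (Fin K → Bool) → ℝ) (v : Fin K → Bool) :
    marg q Finset.univ v = q v := by
  unfold marg
  rw [show Finset.univ.filter (fun t : Fin K → Bool => ∀ i ∈ Finset.univ, t i = v i)
      = {v} by
    ext t
    simp only [Finset.mem_filter, Finset.mem_univ, true_and, Finset.mem_singleton]
    constructor
    · intro h; funext i; exact h i trivial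
    · rintro rfl i _; rfl]
  exact Finset.sum_singleton _ _

lemma expand' (q p : (Fin K → Bool) → ℝ) (o : Equiv.Perm (Fin K)) (𝒞 : SegColl K) :
    ((∑ i ∈ Finset.range 𝒞.L, -∑ t : Fin K → Bool, q t * Real.logb 2 (marg p (𝒞.seg o i) t))
      - ∑ i ∈ Finset.range (𝒞.L - 1),
          -∑ t : Fin K → Bool, q t * Real.logb 2 (marg p (𝒞.ovl o i) t))
    = -∑ t : Fin K → Bool, q t *
        ((∑ i ∈ Finset.range 𝒞.L, Real.logb 2 (marg p (𝒞.seg o i) t))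
          - ∑ i ∈ Finset.range (𝒞.L - 1), Real.logb 2 (marg p (𝒞.ovl o i) t)) := by
  have : ∀ t : Fin K → Bool, q t *
      ((∑ i ∈ Finset.range 𝒞.L, Real.logb 2 (marg p (𝒞.seg o i) t))
        - ∑ i ∈ Finset.range (𝒞.L - 1), Real.logb 2 (marg p (𝒞.ovl o i) t))
      = (∑ i ∈ Finset.range 𝒞.L, q t * Real.logb 2 (marg p (𝒞.seg o i) t))
        - ∑ i ∈ Finset.range (𝒞.L - 1), q t * Real.logb 2 (marg p (𝒞.ovl o i) t) := by
    intro t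
    rw [mul_sub, Finset.mul_sum, Finset.mul_sum]
  rw [Finset.sum_congr rfl (fun t _ => this t), Finset.sum_sub_distrib,
    Finset.sum_comm, @Finset.sum_comm _ _ _ _ Finset.univ]
  simp only [neg_sub, Finset.sum_neg_distrib]
  ring

/-- statement (a): the collection entropy dominates the full entropy. -/
lemma H_le_collEnt (hq : ∀ t, 0 ≤ q t) (hqs : ∑ t, q t = 1) :
    segEntropy q Finset.univ ≤
      (∑ i ∈ Finset.range 𝒞.L, segEntropy q (𝒞.seg o i))
        - ∑ i ∈ Finset.range (𝒞.L - 1), segEntropy q (𝒞.ovl o i) := by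
  set r : (Fin K → Bool) → ℝ := fun t =>
    (∏ i ∈ Finset.range 𝒞.L, marg q (𝒞.seg o i) t)
      / ∏ i ∈ Finset.range (𝒞.L - 1), marg q (𝒞.ovl o i) t with hr
  have hrnn : ∀ t, 0 ≤ r t := fun t =>
    div_nonneg (Finset.prod_nonneg fun i _ => marg_nonneg hq)
      (Finset.prod_nonneg fun i _ => marg_nonneg hq)
  have hrpos : ∀ t, 0 < q t → 0 < r t := by
    intro t ht
    apply div_pos
    · exact Finset.prod_pos fun i _ => lt_of_lt_of_le ht (self_le_marg hq)
    · exact Finset.prod_pos fun i _ => lt_of_lt_of_le ht (self_le_marg hq)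
  -- ∑ r ≤ 1
  have hrsum : ∑ t : Fin K → Bool, r t ≤ 1 := by
    have htel := telescope (o := o) (𝒞 := 𝒞) hq hqs (𝒞.L - 1) (by have := 𝒞.hL; omega)
    have hL1 : 𝒞.L - 1 + 1 = 𝒞.L := by have := 𝒞.hL; omega
    rw [E_last, reps_univ, hL1] at htel
    exact htel
  -- RHS = -∑ q logb r
  have hRHS : (∑ i ∈ Finset.range 𝒞.L, segEntropy q (𝒞.seg o i))
      - ∑ i ∈ Finset.range (𝒞.L - 1), segEntropy q (𝒞.ovl o i)
      = -∑ t : Fin K → Bool, q t * Real.logb 2 (r t) := by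
    rw [Finset.sum_congr rfl (fun i (_ : i ∈ Finset.range 𝒞.L) => segEntropy_eq q (𝒞.seg o i)),
      Finset.sum_congr rfl (fun i (_ : i ∈ Finset.range (𝒞.L-1)) => segEntropy_eq q (𝒞.ovl o i)),
      expand' q q o 𝒞]
    congr 1
    apply Finset.sum_congr rfl
    intro t _
    rcases eq_or_lt_of_le (hq t) with h0 | hqt
    · rw [← h0, zero_mul, zero_mul]
    · congr 1
      have hm : ∀ X : Finset (Fin K), marg q X t ≠ 0 :=
        fun X => (lt_of_lt_of_le hqt (self_le_marg hq)).ne'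
      rw [hr]
      rw [Real.logb_div (Finset.prod_ne_zero_iff.2 fun i _ => hm _)
          (Finset.prod_ne_zero_iff.2 fun i _ => hm _),
        Real.logb_prod _ _ (fun i _ => hm _), Real.logb_prod _ _ (fun i _ => hm _)]
  rw [hRHS, segEntropy_eq q Finset.univ]
  rw [neg_le_neg_iff]
  -- goal : ∑ q logb r ≤ ∑ q logb (marg q univ)  (i.e. ∑ q logb q)
  have hmu : ∀ t : Fin K → Bool, q t * Real.logb 2 (marg q Finset.univ t)
      = q t * Real.logb 2 (q t) := fun t => by rw [marg_univ]
  rw [Finset.sum_congr rfl fun t _ => hmu t]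
  -- suffices: 0 ≤ ∑ q * logb (q/r)
  set T := Finset.univ.filter (fun t : Fin K → Bool => q t ≠ 0) with hT
  have hqT : ∑ t ∈ T, q t = 1 := by
    rw [hT, Finset.sum_filter_of_ne (fun t _ h => h), hqs]
  have key : 0 ≤ ∑ t ∈ T, q t * Real.logb 2 (q t / r t) := by
    have hRnn : 0 ≤ ∑ t ∈ T, r t :=
      Finset.sum_nonneg fun t _ => hrnn t
    have hRle : ∑ t ∈ T, r t ≤ 1 := by
      refine le_trans ?_ hrsum
      exact Finset.sum_le_sum_of_subset_of_nonneg (Finset.filter_subset _ _)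
        (fun t _ _ => hrnn t)
    have hTne : T.Nonempty := by
      by_contra h
      rw [Finset.not_nonempty_iff_eq_empty] at h
      rw [h, Finset.sum_empty] at hqT
      norm_num at hqT
    have hRpos : 0 < ∑ t ∈ T, r t := by
      apply Finset.sum_pos
      · intro t ht
        simp only [hT, Finset.mem_filter] at ht
        exact hrpos t (lt_of_le_of_ne (hq t) (Ne.symm ht.2))
      · exact hTne
    have hls := logb_sum_ineq T q r
      (fun t _ => hq t)
      (fun t ht => by
        simp only [hT, Finset.mem_filter] at ht
        exact hrpos t (lt_of_le_of_ne (hq t) (Ne.symm ht.2)))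
    rw [hqT] at hls
    refine le_trans ?_ hls
    rw [one_mul]
    apply Real.logb_nonneg one_lt_two
    rw [le_div_iff₀ hRpos, one_mul]
    exact hRle
  have hsplit : ∀ t : Fin K → Bool, q t * Real.logb 2 (q t) - q t * Real.logb 2 (r t)
      = q t * Real.logb 2 (q t / r t) := by
    intro t
    rcases eq_or_lt_of_le (hq t) with h0 | hqt
    · rw [← h0]; ring
    · rw [← mul_sub, Real.logb_div hqt.ne' (hrpos t hqt).ne']
  have : ∑ t ∈ T, q t * Real.logb 2 (q t / r t)
      = (∑ t : Fin K → Bool, q t * Real.logb 2 (q t))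
        - ∑ t : Fin K → Bool, q t * Real.logb 2 (r t) := by
    rw [← Finset.sum_sub_distrib, Finset.sum_congr rfl fun t _ => (hsplit t).symm, hT,
      Finset.sum_filter_of_ne]
    intro t _ h
    intro h0
    apply h
    rw [h0, zero_mul, zero_mul, sub_zero]
  linarith [key, this]

end StatementA

section Deterministic
variable {K : ℕ} {q p : (Fin K → Bool) → ℝ}

lemma empDist_nonneg (D : Multiset (Fin K → Bool)) (v : Fin K → Bool) :
    0 ≤ empDist D v :=
  div_nonneg (Nat.cast_nonneg _) (Nat.cast_nonneg _)

lemma empDist_sum {D : Multiset (Fin K → Bool)} (hD : Multiset.card D ≠ 0) :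
    ∑ v : Fin K → Bool, empDist D v = 1 := by
  unfold empDist
  rw [← Finset.sum_div]
  rw [show ∑ v : Fin K → Bool, (D.count v : ℝ) = (Multiset.card D : ℝ) by
    rw [← Nat.cast_sum]
    congr 1
    rw [← Multiset.toFinset_sum_count_eq D]
    rw [Finset.sum_subset (Finset.subset_univ D.toFinset)]
    intro v _ hv
    exact Multiset.count_eq_zero_of_notMem (fun h => hv (Multiset.mem_toFinset.2 h))]
  rw [div_self]
  exact Nat.cast_ne_zero.2 hD

lemma kl_le_chisq (hq : ∀ t, 0 ≤ q t) (hqs : ∑ t, q t = 1) (hp : ∀ t, 0 < p t)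
    (hps : ∑ t, p t = 1) :
    ∑ t : Fin K → Bool, q t * Real.logb 2 (q t / p t)
      ≤ (∑ t : Fin K → Bool, (q t - p t)^2 / p t) / Real.log 2 := by
  have hl2 : (0:ℝ) < Real.log 2 := Real.log_pos one_lt_two
  have hlog : ∑ t : Fin K → Bool, q t * Real.log (q t / p t)
      ≤ ∑ t : Fin K → Bool, (q t - p t)^2 / p t := by
    have per : ∀ t : Fin K → Bool,
        q t * Real.log (q t / p t) ≤ (q t - p t)^2 / p t + (q t - p t) := by
      intro t
      have hpt := (hp t).ne'
      rcases eq_or_lt_of_le (hq t) with h0 | hqt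
      · rw [← h0]
        have : ((0:ℝ) - p t)^2 / p t + (0 - p t) = 0 := by field_simp; ring
        rw [this, zero_mul]
      · have hl := Real.log_le_sub_one_of_pos (div_pos hqt (hp t))
        have h2 : q t * Real.log (q t / p t) ≤ q t * (q t / p t - 1) :=
          mul_le_mul_of_nonneg_left hl hqt.le
        refine h2.trans (le_of_eq ?_)
        field_simp
        ring
    calc ∑ t : Fin K → Bool, q t * Real.log (q t / p t)
        ≤ ∑ t : Fin K → Bool, ((q t - p t)^2 / p t + (q t - p t)) :=
          Finset.sum_le_sum fun t _ => per t
      _ = ∑ t : Fin K → Bool, (q t - p t)^2 / p t := by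
          rw [Finset.sum_add_distrib, Finset.sum_sub_distrib, hqs, hps]
          ring
  simp only [Real.logb, ← mul_div_assoc]
  rw [← Finset.sum_div]
  gcongr

/-- the master deterministic bound -/
theorem det_bound {o₁ o₂ : Equiv.Perm (Fin K)} {𝒞₁ 𝒞₂ : SegColl K}
    (hpos : ∀ t, 0 < p t) (hps : ∑ t, p t = 1)
    (h₁ : memModel o₁ 𝒞₁ p) (h₂ : memModel o₂ 𝒞₂ p)
    {D : Multiset (Fin K → Bool)} (hD : Multiset.card D ≠ 0) :
    collEnt D o₁ 𝒞₁ - collEnt D o₂ 𝒞₂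
      ≤ (∑ t : Fin K → Bool, (empDist D t - p t)^2 / p t) / Real.log 2 := by
  set q := empDist D with hqdef
  have hq : ∀ t, 0 ≤ q t := empDist_nonneg D
  have hqs : ∑ t, q t = 1 := empDist_sum hD
  have hb := collEnt_le_cross h₁ hpos hq hqs
  have ha := H_le_collEnt (𝒞 := 𝒞₂) (o := o₂) hq hqs
  have hkl : (-∑ t : Fin K → Bool, q t * Real.logb 2 (p t)) - segEntropy q Finset.univ
      = ∑ t : Fin K → Bool, q t * Real.logb 2 (q t / p t) := by
    rw [segEntropy_eq q Finset.univ, neg_sub_neg, ← Finset.sum_sub_distrib]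
    apply Finset.sum_congr rfl
    intro t _
    rw [marg_univ, ← mul_sub]
    rcases eq_or_lt_of_le (hq t) with h0 | hqt
    · rw [← h0]; ring
    · rw [Real.logb_div hqt.ne' (hpos t).ne']
  have hchain : collEnt D o₁ 𝒞₁ - collEnt D o₂ 𝒞₂
      ≤ ∑ t : Fin K → Bool, q t * Real.logb 2 (q t / p t) := by
    unfold collEnt
    rw [← hkl]
    linarith [hb, ha]
  exact hchain.trans (kl_le_chisq hq hqs hpos hps)

end Deterministic

section Prob
open MeasureTheory ProbabilityTheory

variable {K : ℕ} {Ω : Type*} [MeasurableSpace Ω] {μ : Measure Ω} [IsProbabilityMeasure μ]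
  {X : ℕ → Ω → (Fin K → Bool)} {p : (Fin K → Bool) → ℝ}

/-- indicator of the event `X n = v` -/
noncomputable def ind (X : ℕ → Ω → (Fin K → Bool)) (n : ℕ) (v : Fin K → Bool) (ω : Ω) : ℝ :=
  if X n ω = v then 1 else 0

/-- centered indicator -/
noncomputable def cc (X : ℕ → Ω → (Fin K → Bool)) (p : (Fin K → Bool) → ℝ)
    (n : ℕ) (v : Fin K → Bool) (ω : Ω) : ℝ :=
  ind X n v ω - p v

lemma integrable_of_bdd {f : Ω → ℝ} (hf : Measurable f) (C : ℝ) (h : ∀ ω, |f ω| ≤ C) :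
    Integrable f μ :=
  Integrable.mono' (integrable_const C) hf.aestronglyMeasurable
    (Filter.Eventually.of_forall fun ω => by simpa using h ω)

lemma ind_meas (hmeas : ∀ n, Measurable (X n)) (n : ℕ) (v : Fin K → Bool) :
    Measurable (ind X n v) := by
  have hs : MeasurableSet {ω | X n ω = v} := hmeas n (measurableSet_singleton v)
  exact Measurable.ite hs measurable_const measurable_const

lemma ind_integrable (hmeas : ∀ n, Measurable (X n)) (n : ℕ) (v : Fin K → Bool) :
    Integrable (ind X n v) μ :=
  integrable_of_bdd (ind_meas hmeas n v) 1 (fun ω => by unfold ind; split <;> simp)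

lemma ind_integral (hmeas : ∀ n, Measurable (X n)) (hp : ∀ v, 0 ≤ p v)
    (hlaw : ∀ n v, μ {ω | X n ω = v} = ENNReal.ofReal (p v)) (n : ℕ) (v : Fin K → Bool) :
    ∫ ω, ind X n v ω ∂μ = p v := by
  have hs : MeasurableSet {ω | X n ω = v} := hmeas n (measurableSet_singleton v)
  have : (fun ω => ind X n v ω) = Set.indicator {ω | X n ω = v} (fun _ => (1:ℝ)) := by
    funext ω
    rw [Set.indicator_apply]
    rfl
  rw [this, integral_indicator_const (1:ℝ) hs, measureReal_def, hlaw n v, smul_eq_mul, mul_one,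
    ENNReal.toReal_ofReal (hp v)]

lemma cc_meas (hmeas : ∀ n, Measurable (X n)) (n : ℕ) (v : Fin K → Bool) :
    Measurable (cc X p n v) :=
  (ind_meas hmeas n v).sub measurable_const

lemma cc_integrable (hmeas : ∀ n, Measurable (X n)) (n : ℕ) (v : Fin K → Bool) :
    Integrable (cc X p n v) μ :=
  (ind_integrable hmeas n v).sub (integrable_const _)

lemma cc_integral (hmeas : ∀ n, Measurable (X n)) (hp : ∀ v, 0 ≤ p v)
    (hlaw : ∀ n v, μ {ω | X n ω = v} = ENNReal.ofReal (p v)) (n : ℕ) (v : Fin K → Bool) :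
    ∫ ω, cc X p n v ω ∂μ = 0 := by
  unfold cc
  rw [integral_sub (ind_integrable hmeas n v) (integrable_const _),
    ind_integral hmeas hp hlaw n v, integral_const]
  simp

lemma cc_mul_integrable (hmeas : ∀ n, Measurable (X n)) (m n : ℕ) (v : Fin K → Bool) :
    Integrable (fun ω => cc X p m v ω * cc X p n v ω) μ := by
  apply integrable_of_bdd ((cc_meas hmeas m v).mul (cc_meas hmeas n v))
    ((1 + |p v|) * (1 + |p v|))
  intro ω
  rw [Pi.mul_apply, abs_mul]
  have hb : ∀ j, |cc X p j v ω| ≤ 1 + |p v| := by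
    intro j
    unfold cc ind
    refine (abs_sub _ _).trans ?_
    gcongr
    split <;> simp
  exact mul_le_mul (hb m) (hb n) (abs_nonneg _) (by positivity)

lemma cc_sq_integral (hmeas : ∀ n, Measurable (X n)) (hp : ∀ v, 0 ≤ p v)
    (hlaw : ∀ n v, μ {ω | X n ω = v} = ENNReal.ofReal (p v)) (n : ℕ) (v : Fin K → Bool) :
    ∫ ω, cc X p n v ω * cc X p n v ω ∂μ = p v - p v * p v := by
  have hexp : ∀ ω, cc X p n v ω * cc X p n v ω
      = (1 - 2 * p v) * ind X n v ω + p v * p v := by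
    intro ω
    unfold cc ind
    split <;> ring
  rw [integral_congr_ae (Filter.Eventually.of_forall (fun ω => hexp ω)),
    integral_add ((ind_integrable hmeas n v).const_mul _) (integrable_const _),
    integral_const_mul, ind_integral hmeas hp hlaw n v, integral_const]
  simp
  ring

lemma cc_mul_integral_ne (hmeas : ∀ n, Measurable (X n)) (hp : ∀ v, 0 ≤ p v)
    (hindep : ProbabilityTheory.iIndepFun X μ)
    (hlaw : ∀ n v, μ {ω | X n ω = v} = ENNReal.ofReal (p v))
    {m n : ℕ} (hmn : m ≠ n) (v : Fin K → Bool) :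
    ∫ ω, cc X p m v ω * cc X p n v ω ∂μ = 0 := by
  have hf : IndepFun (cc X p m v) (cc X p n v) μ := by
    have h0 : IndepFun (X m) (X n) μ := hindep.indepFun hmn
    have := h0.comp (φ := fun u : Fin K → Bool => (if u = v then (1:ℝ) else 0) - p v)
      (ψ := fun u : Fin K → Bool => (if u = v then (1:ℝ) else 0) - p v)
      (measurable_of_countable _) (measurable_of_countable _)
    exact this
  have := hf.integral_mul_eq_mul_integral (cc_meas hmeas m v).aestronglyMeasurable
    (cc_meas hmeas n v).aestronglyMeasurable
  calc ∫ ω, cc X p m v ω * cc X p n v ω ∂μ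
      = ∫ ω, (cc X p m v * cc X p n v) ω ∂μ := rfl
    _ = (∫ ω, cc X p m v ω ∂μ) * ∫ ω, cc X p n v ω ∂μ := this
    _ = 0 := by rw [cc_integral hmeas hp hlaw, zero_mul]

lemma var_bound (hmeas : ∀ n, Measurable (X n)) (hp : ∀ v, 0 ≤ p v)
    (hindep : ProbabilityTheory.iIndepFun X μ)
    (hlaw : ∀ n v, μ {ω | X n ω = v} = ENNReal.ofReal (p v)) (N : ℕ) (v : Fin K → Bool) :
    ∫ ω, (∑ n ∈ Finset.range N, cc X p n v ω)^2 ∂μ ≤ N * p v := by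
  have hsq : ∀ ω : Ω, (∑ n ∈ Finset.range N, cc X p n v ω)^2
      = ∑ m ∈ Finset.range N, ∑ n ∈ Finset.range N, cc X p m v ω * cc X p n v ω := by
    intro ω
    rw [sq, Finset.sum_mul_sum]
  rw [integral_congr_ae (Filter.Eventually.of_forall hsq)]
  rw [integral_finset_sum _ (fun m _ => integrable_finset_sum _
    (fun n _ => cc_mul_integrable hmeas m n v))]
  have : ∀ m ∈ Finset.range N,
      ∫ ω, ∑ n ∈ Finset.range N, cc X p m v ω * cc X p n v ω ∂μ = p v - p v * p v := by
    intro m hm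
    rw [integral_finset_sum _ (fun n _ => cc_mul_integrable hmeas m n v)]
    rw [Finset.sum_eq_single_of_mem m hm
      (fun n _ hne => cc_mul_integral_ne hmeas hp hindep hlaw (Ne.symm hne) v)]
    exact cc_sq_integral hmeas hp hlaw m v
  rw [Finset.sum_congr rfl this, Finset.sum_const, Finset.card_range, nsmul_eq_mul]
  have : p v - p v * p v ≤ p v := by nlinarith [hp v, sq_nonneg (p v)]
  calc (N:ℝ) * (p v - p v * p v) ≤ (N:ℝ) * p v := by
        apply mul_le_mul_of_nonneg_left this (Nat.cast_nonneg N)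
end Prob

section Prob2
open MeasureTheory

variable {K : ℕ} {Ω : Type*} [MeasurableSpace Ω] {μ : Measure Ω} [IsProbabilityMeasure μ]
  {X : ℕ → Ω → (Fin K → Bool)} {p : (Fin K → Bool) → ℝ}

lemma sampleData_card (N : ℕ) (ω : Ω) :
    Multiset.card (sampleData X N ω) = N := by
  rw [sampleData, Multiset.card_map, Multiset.card_range]

lemma count_eq_sum_ind (N : ℕ) (ω : Ω) (v : Fin K → Bool) :
    (((sampleData X N ω).count v : ℕ) : ℝ) = ∑ n ∈ Finset.range N, ind X n v ω := by
  rw [sampleData, Multiset.count_map]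
  rw [show Multiset.range N = (Finset.range N).val from rfl]
  rw [← Finset.filter_val (fun a => v = X a ω) (Finset.range N)]
  rw [show Multiset.card (Finset.filter (fun a => v = X a ω) (Finset.range N)).val
      = (Finset.filter (fun a => v = X a ω) (Finset.range N)).card from rfl]
  rw [Finset.card_filter]
  push_cast
  apply Finset.sum_congr rfl
  intro n _
  unfold ind
  by_cases h : X n ω = v
  · simp [h]
  · have h' : ¬ v = X n ω := fun hh => h hh.symm
    simp [h, h']

lemma empDist_sub (N : ℕ) (hN : N ≠ 0) (ω : Ω) (v : Fin K → Bool) :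
    empDist (sampleData X N ω) v - p v
      = (∑ n ∈ Finset.range N, cc X p n v ω) / N := by
  have hNr : (N:ℝ) ≠ 0 := Nat.cast_ne_zero.2 hN
  rw [empDist, sampleData_card, count_eq_sum_ind]
  unfold cc
  rw [Finset.sum_sub_distrib, Finset.sum_const, Finset.card_range, nsmul_eq_mul, sub_div]
  congr 1
  field_simp

lemma empDist_sq_integral (hmeas : ∀ n, Measurable (X n)) (hp : ∀ v, 0 ≤ p v)
    (hindep : ProbabilityTheory.iIndepFun X μ)
    (hlaw : ∀ n v, μ {ω | X n ω = v} = ENNReal.ofReal (p v))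
    (N : ℕ) (hN : N ≠ 0) (v : Fin K → Bool) :
    ∫ ω, (empDist (sampleData X N ω) v - p v)^2 ∂μ ≤ p v / N := by
  have hNr : (0:ℝ) < (N:ℝ) := by positivity
  have heq : ∀ ω : Ω, (empDist (sampleData X N ω) v - p v)^2
      = (∑ n ∈ Finset.range N, cc X p n v ω)^2 / (N:ℝ)^2 := by
    intro ω
    rw [empDist_sub N hN ω v, div_pow]
  rw [integral_congr_ae (Filter.Eventually.of_forall heq)]
  rw [integral_div]
  rw [div_le_div_iff₀ (by positivity) hNr]
  calc (∫ ω, (∑ n ∈ Finset.range N, cc X p n v ω)^2 ∂μ) * N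
      ≤ ((N:ℝ) * p v) * N := by
        apply mul_le_mul_of_nonneg_right (var_bound hmeas hp hindep hlaw N v) hNr.le
    _ = p v * (N:ℝ)^2 := by ring

end Prob2


/-- For i.i.d. data from `p` ... -/
theorem entropy_difference_bounded_in_probability {K : ℕ}
    (p : (Fin K → Bool) → ℝ) (hdist : IsDist p) (hpos : ∀ t, 0 < p t)
    (o₁ o₂ : Equiv.Perm (Fin K)) (𝒞₁ 𝒞₂ : SegColl K)
    (h₁ : memModel o₁ 𝒞₁ p) (h₂ : memModel o₂ 𝒞₂ p)
    {Ω : Type*} [MeasurableSpace Ω] (ℙ : Measure Ω) [IsProbabilityMeasure ℙ]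
    (X : ℕ → Ω → (Fin K → Bool)) (hmeas : ∀ n, Measurable (X n))
    (hindep : ProbabilityTheory.iIndepFun X ℙ)
    (hlaw : ∀ n v, ℙ {ω | X n ω = v} = ENNReal.ofReal (p v))
    (t : ℕ → ℝ) (ht : Tendsto t atTop atTop) :
    Tendsto
      (fun N => ℙ {ω | t N ≤
          (N : ℝ) * collEnt (sampleData X N ω) o₁ 𝒞₁
            - (N : ℝ) * collEnt (sampleData X N ω) o₂ 𝒞₂})
      atTop (nhds 0) := by
  classical
  have hp : ∀ v, 0 ≤ p v := fun v => (hpos v).le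
  have hps : ∑ v : Fin K → Bool, p v = 1 := hdist.2
  have hl2 : (0:ℝ) < Real.log 2 := Real.log_pos one_lt_two
  set m : ℝ := (Fintype.card (Fin K → Bool) : ℝ) with hm
  set c : ℝ := m / Real.log 2 with hc
  have hcnn : 0 ≤ c := by positivity
  -- the dominating chi-square statistic
  set chi2 : ℕ → Ω → ℝ := fun N ω =>
    ∑ v : Fin K → Bool, (empDist (sampleData X N ω) v - p v)^2 / p v with hchi2
  have hbound : ∀ᶠ N in atTop,
      ℙ {ω | t N ≤ (N : ℝ) * collEnt (sampleData X N ω) o₁ 𝒞₁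
          - (N : ℝ) * collEnt (sampleData X N ω) o₂ 𝒞₂}
        ≤ ENNReal.ofReal (c / t N) := by
    filter_upwards [ht.eventually_ge_atTop 1, eventually_ge_atTop 1] with N htN hN1
    have hN : N ≠ 0 := by omega
    have htpos : (0:ℝ) < t N := lt_of_lt_of_le one_pos htN
    set g : Ω → ℝ := fun ω => ((N:ℝ) / Real.log 2) * chi2 N ω with hg
    have hchinn : ∀ ω, 0 ≤ chi2 N ω := fun ω =>
      Finset.sum_nonneg fun v _ => div_nonneg (sq_nonneg _) (hp v)
    have hgnn : ∀ ω, 0 ≤ g ω := fun ω =>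
      mul_nonneg (by positivity) (hchinn ω)
    -- pointwise bound
    have hsub : {ω | t N ≤ (N : ℝ) * collEnt (sampleData X N ω) o₁ 𝒞₁
        - (N : ℝ) * collEnt (sampleData X N ω) o₂ 𝒞₂} ⊆ {ω | t N ≤ g ω} := by
      intro ω hω
      simp only [Set.mem_setOf_eq] at hω ⊢
      refine le_trans hω ?_
      have hdet := det_bound hpos hps h₁ h₂
        (D := sampleData X N ω) (by rw [sampleData_card]; exact hN)
      have hNnn : (0:ℝ) ≤ (N:ℝ) := Nat.cast_nonneg N
      calc (N : ℝ) * collEnt (sampleData X N ω) o₁ 𝒞₁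
            - (N : ℝ) * collEnt (sampleData X N ω) o₂ 𝒞₂
          = (N:ℝ) * (collEnt (sampleData X N ω) o₁ 𝒞₁
              - collEnt (sampleData X N ω) o₂ 𝒞₂) := by ring
        _ ≤ (N:ℝ) * (chi2 N ω / Real.log 2) := mul_le_mul_of_nonneg_left hdet hNnn
        _ = g ω := by rw [hg]; ring
    -- integrability
    have hsq_int : ∀ v : Fin K → Bool,
        Integrable (fun ω => (empDist (sampleData X N ω) v - p v)^2) ℙ := by
      intro v
      have heq : (fun ω => (empDist (sampleData X N ω) v - p v)^2)
          = fun ω => (∑ mm ∈ Finset.range N, ∑ n ∈ Finset.range N,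
              cc X p mm v ω * cc X p n v ω) / (N:ℝ)^2 := by
        funext ω
        rw [empDist_sub N hN ω v, div_pow, sq, Finset.sum_mul_sum]
      rw [heq]
      exact (integrable_finset_sum _ (fun mm _ => integrable_finset_sum _
        (fun n _ => cc_mul_integrable hmeas mm n v))).div_const _
    have hchi_int : Integrable (chi2 N) ℙ := by
      rw [hchi2]
      exact integrable_finset_sum _ (fun v _ => (hsq_int v).div_const _)
    have hg_int : Integrable g ℙ := hchi_int.const_mul _
    -- expected value bound
    have hchi_exp : ∫ ω, chi2 N ω ∂ℙ ≤ m / N := by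
      rw [hchi2]
      rw [integral_finset_sum _ (fun v _ => (hsq_int v).div_const _)]
      rw [Finset.sum_congr rfl (fun (v : Fin K → Bool) _ =>
        integral_div (p v) (fun ω => (empDist (sampleData X N ω) v - p v)^2))]
      have hper : ∀ v : Fin K → Bool, (∫ ω, (empDist (sampleData X N ω) v - p v)^2 ∂ℙ) / p v
          ≤ 1 / N := by
        intro v
        rw [div_le_div_iff₀ (hpos v) (by positivity)]
        calc (∫ ω, (empDist (sampleData X N ω) v - p v)^2 ∂ℙ) * N
            ≤ (p v / N) * N := by
              exact mul_le_mul_of_nonneg_right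
                (empDist_sq_integral hmeas hp hindep hlaw N hN v) (by positivity)
          _ = p v * 1 := by field_simp
          _ = 1 * p v := by ring
      calc ∑ v : Fin K → Bool, (∫ ω, (empDist (sampleData X N ω) v - p v)^2 ∂ℙ) / p v
          ≤ ∑ v : Fin K → Bool, (1:ℝ) / N :=
            Finset.sum_le_sum fun v _ => hper v
        _ = m / N := by
            rw [Finset.sum_const, Finset.card_univ, nsmul_eq_mul, hm]
            ring
    have hg_exp : ∫ ω, g ω ∂ℙ ≤ c := by
      rw [hg]
      rw [integral_const_mul]
      calc ((N:ℝ) / Real.log 2) * ∫ ω, chi2 N ω ∂ℙ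
          ≤ ((N:ℝ) / Real.log 2) * (m / N) := by
            apply mul_le_mul_of_nonneg_left hchi_exp (by positivity)
        _ = c := by
            rw [hc]
            have : (N:ℝ) ≠ 0 := Nat.cast_ne_zero.2 hN
            field_simp
    -- Markov
    have hmarkov := mul_meas_ge_le_integral_of_nonneg
      (Filter.Eventually.of_forall hgnn) hg_int (t N)
    have htoReal : (ℙ {ω | t N ≤ g ω}).toReal ≤ c / t N := by
      rw [le_div_iff₀ htpos]
      calc (ℙ {ω | t N ≤ g ω}).toReal * t N
          = t N * (ℙ {ω | t N ≤ g ω}).toReal := by ring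
        _ ≤ ∫ ω, g ω ∂ℙ := hmarkov
        _ ≤ c := hg_exp
    calc ℙ {ω | t N ≤ (N : ℝ) * collEnt (sampleData X N ω) o₁ 𝒞₁
        - (N : ℝ) * collEnt (sampleData X N ω) o₂ 𝒞₂}
        ≤ ℙ {ω | t N ≤ g ω} := measure_mono hsub
      _ ≤ ENNReal.ofReal (c / t N) := by
          rw [ENNReal.le_ofReal_iff_toReal_le (measure_ne_top ℙ _)
            (div_nonneg hcnn htpos.le)]
          exact htoReal
  -- squeeze
  have hupper : Tendsto (fun N => ENNReal.ofReal (c / t N)) atTop (nhds 0) := by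
    have hreal : Tendsto (fun N => c / t N) atTop (nhds 0) :=
      Tendsto.div_atTop tendsto_const_nhds ht
    have := (ENNReal.continuous_ofReal.tendsto 0).comp hreal
    simpa [Function.comp_def] using this
  apply tendsto_of_tendsto_of_tendsto_of_le_of_le' tendsto_const_nhds hupper
  · exact Filter.Eventually.of_forall fun N => zero_le
  · exact hbound
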